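/- Let B₀, …, B_{n-1} be pairwise interior-disjoint closed disks in the Euclidean plane with positive radii. Then the integral over x ∈ [1,2] (with respect to Lebesgue measure) of the number of indices i such that the circle of radius x centered at the origin intersects B_i is at most 4·√n. Equivalently, if x is chosen uniformly at random in [1,2], the expected number of disks B_i intersecting the circle of radius x centered at the origin is at most 4·√n. -/

import Mathlib

open MeasureTheory Metric

local notation "E" => EuclideanSpace ℝ (Fin 2)

lemma exists_pt (p : E) {d : ℝ} (hd : 0 ≤ d) : ∃ c : E, ‖c‖ = d ∧ dist c p = |d - ‖p‖| := by
  rcases eq_or_ne p 0 with hp | hp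
  · obtain ⟨c, hc⟩ := exists_norm_eq (EuclideanSpace ℝ (Fin 2)) hd
    exact ⟨c, hc, by simp [hp, hc, abs_of_nonneg hd]⟩
  · have hnp : (0:ℝ) < ‖p‖ := norm_pos_iff.mpr hp
    refine ⟨(d / ‖p‖) • p, ?_, ?_⟩
    · rw [norm_smul, Real.norm_eq_abs, abs_of_nonneg (div_nonneg hd hnp.le),
        div_mul_cancel₀ _ hnp.ne']
    · rw [dist_eq_norm]
      have : (d / ‖p‖) • p - p = ((d - ‖p‖) / ‖p‖) • p := by
        rw [sub_div, div_self hnp.ne', sub_smul, one_smul]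
      rw [this, norm_smul, Real.norm_eq_abs, abs_div, abs_of_pos hnp,
        div_mul_cancel₀ _ hnp.ne']

lemma hit_iff (p : E) (r x : ℝ) (hx : 0 ≤ x) :
    (Metric.sphere (0:E) x ∩ Metric.closedBall p r).Nonempty ↔ |‖p‖ - x| ≤ r := by
  constructor
  · rintro ⟨q, hq1, hq2⟩
    rw [mem_sphere_zero_iff_norm] at hq1
    rw [Metric.mem_closedBall] at hq2
    calc |‖p‖ - x| = |‖p‖ - ‖q‖| := by rw [hq1]
      _ ≤ ‖p - q‖ := abs_norm_sub_norm_le _ _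
      _ = dist q p := by rw [dist_eq_norm, norm_sub_rev]
      _ ≤ r := hq2
  · intro h
    obtain ⟨c, hc1, hc2⟩ := exists_pt p hx
    refine ⟨c, mem_sphere_zero_iff_norm.mpr hc1, Metric.mem_closedBall.mpr ?_⟩
    rw [hc2, abs_sub_comm]; exact h

lemma vol_ball_2d (c : E) (s : ℝ) :
    volume (Metric.ball c s) = ENNReal.ofReal s ^ 2 * ENNReal.ofReal Real.pi := by
  rw [EuclideanSpace.volume_ball, Fintype.card_fin]
  norm_num
  rw [← ENNReal.ofReal_pow (Real.sqrt_nonneg _), Real.sq_sqrt Real.pi_nonneg]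

theorem integral_count_hitting_circle_le
    (n : ℕ) (p : Fin n → EuclideanSpace ℝ (Fin 2)) (r : Fin n → ℝ)
    (hr : ∀ i, 0 < r i)
    (hdisj : Pairwise fun i j =>
      Disjoint (Metric.ball (p i) (r i)) (Metric.ball (p j) (r j))) :
    (∫ x in Set.Icc (1 : ℝ) 2,
      (({i : Fin n | (Metric.sphere (0 : EuclideanSpace ℝ (Fin 2)) x ∩
        Metric.closedBall (p i) (r i)).Nonempty}).ncard : ℝ)) ≤ 4 * Real.sqrt n := by
  classical
  set a : Fin n → ℝ := fun i => max 1 (‖p i‖ - r i) with ha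
  set b : Fin n → ℝ := fun i => min 2 (‖p i‖ + r i) with hb
  set L : Fin n → ℝ := fun i => max (b i - a i) 0 with hL
  have hL0 : ∀ i, 0 ≤ L i := fun i => le_max_right _ _
  -- Step A: the integral equals ∑ L i
  have hcount : Set.EqOn
      (fun x => (({i : Fin n | (Metric.sphere (0 : EuclideanSpace ℝ (Fin 2)) x ∩
        Metric.closedBall (p i) (r i)).Nonempty}).ncard : ℝ))
      (fun x => ∑ i : Fin n, (Set.Icc (a i) (b i)).indicator (fun _ => (1:ℝ)) x)
      (Set.Icc (1:ℝ) 2) := by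
    intro x hx
    have hx0 : (0:ℝ) ≤ x := le_trans zero_le_one hx.1
    have hiff : ∀ i : Fin n, (Metric.sphere (0:E) x ∩
        Metric.closedBall (p i) (r i)).Nonempty ↔ x ∈ Set.Icc (a i) (b i) := by
      intro i
      rw [hit_iff _ _ _ hx0, abs_le, Set.mem_Icc]
      constructor
      · rintro ⟨h1, h2⟩
        exact ⟨max_le hx.1 (by linarith), le_min hx.2 (by linarith)⟩
      · rintro ⟨h1, h2⟩
        have h1' : ‖p i‖ - r i ≤ x := le_trans (le_max_right _ _) h1
        have h2' : x ≤ ‖p i‖ + r i := le_trans h2 (min_le_right _ _)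
        exact ⟨by linarith, by linarith⟩
    have hset : {i : Fin n | (Metric.sphere (0:E) x ∩
        Metric.closedBall (p i) (r i)).Nonempty}
        = ↑(Finset.univ.filter fun i => x ∈ Set.Icc (a i) (b i)) := by
      ext i; simp [hiff i]
    simp only [hset, Set.ncard_coe_finset, Finset.card_filter]
    push_cast
    simp [Set.indicator_apply]
  have hintL : ∀ i : Fin n,
      (∫ x in Set.Icc (1:ℝ) 2, (Set.Icc (a i) (b i)).indicator (fun _ => (1:ℝ)) x) = L i := by
    intro i
    rw [setIntegral_indicator measurableSet_Icc]
    have hsub : Set.Icc (1:ℝ) 2 ∩ Set.Icc (a i) (b i) = Set.Icc (a i) (b i) :=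
      Set.inter_eq_right.mpr (fun x hx =>
        ⟨le_trans (le_max_left _ _) hx.1, le_trans hx.2 (min_le_left _ _)⟩)
    rw [hsub, setIntegral_const, measureReal_def, Real.volume_Icc, smul_eq_mul, mul_one,
      ENNReal.toReal_ofReal']
  have hInt : ∀ i : Fin n, IntegrableOn
      ((Set.Icc (a i) (b i)).indicator (fun _ => (1:ℝ))) (Set.Icc (1:ℝ) 2) volume := by
    intro i
    exact (integrableOn_const measure_Icc_lt_top.ne).indicator measurableSet_Icc
  have hintegral : (∫ x in Set.Icc (1 : ℝ) 2,
      (({i : Fin n | (Metric.sphere (0 : EuclideanSpace ℝ (Fin 2)) x ∩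
        Metric.closedBall (p i) (r i)).Nonempty}).ncard : ℝ)) = ∑ i : Fin n, L i := by
    rw [setIntegral_congr_fun measurableSet_Icc hcount,
      integral_finset_sum _ (fun i _ => hInt i)]
    exact Finset.sum_congr rfl (fun i _ => hintL i)
  rw [hintegral]
  -- Step B: geometry — ∑ L i ^ 2 ≤ 16
  set d : Fin n → ℝ := fun i => (a i + b i) / 2 with hd
  have hb0 : ∀ i, 0 < b i := fun i =>
    lt_min two_pos (add_pos_of_nonneg_of_pos (norm_nonneg _) (hr i))
  have ha1 : ∀ i, 1 ≤ a i := fun i => le_max_left _ _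
  have hd0 : ∀ i, 0 ≤ d i := fun i => by
    have := hb0 i; have := ha1 i; simp only [hd]; linarith
  choose c hc1 hc2 using fun i => exists_pt (p i) (hd0 i)
  have hLpos : ∀ i, 0 < L i → L i = b i - a i := by
    intro i h
    rcases max_cases (b i - a i) 0 with ⟨h1, _⟩ | ⟨h1, _⟩
    · exact h1
    · exact absurd (h.trans_le (le_of_eq h1)) (lt_irrefl 0)
  have hsubP : ∀ i, Metric.ball (c i) (L i / 2) ⊆ Metric.ball (p i) (r i) := by
    intro i
    rcases le_or_gt (L i) 0 with h | h
    · rw [Metric.ball_eq_empty.mpr (by linarith)]; exact Set.empty_subset _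
    · have hE : L i = b i - a i := hLpos i h
      apply Metric.ball_subset_ball'
      rw [hc2 i]
      have h1 : ‖p i‖ - r i ≤ a i := le_max_right _ _
      have h2 : b i ≤ ‖p i‖ + r i := min_le_right _ _
      have hdval : d i = (a i + b i) / 2 := rfl
      have habs : |d i - ‖p i‖| ≤ r i - L i / 2 := by
        rw [abs_le]
        exact ⟨by linarith, by linarith⟩
      linarith [habs]
  have hsub0 : ∀ i, Metric.ball (c i) (L i / 2) ⊆ Metric.ball (0:E) 2 := by
    intro i
    rcases le_or_gt (L i) 0 with h | h
    · rw [Metric.ball_eq_empty.mpr (by linarith)]; exact Set.empty_subset _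
    · have hE : L i = b i - a i := hLpos i h
      apply Metric.ball_subset_ball'
      rw [dist_zero_right, hc1 i]
      have hdval : d i = (a i + b i) / 2 := rfl
      have h2 : b i ≤ 2 := min_le_left _ _
      linarith
  have hdisj2 : Pairwise (Function.onFun Disjoint fun i => Metric.ball (c i) (L i / 2)) :=
    fun i j hij => (hdisj hij).mono (hsubP i) (hsubP j)
  have hvol : ∑ i : Fin n, volume (Metric.ball (c i) (L i / 2)) ≤
      volume (Metric.ball (0:E) 2) := by
    have h1 := measure_iUnion (μ := volume) hdisj2 (fun i => measurableSet_ball)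
    rw [tsum_fintype] at h1
    rw [← h1]
    exact measure_mono (Set.iUnion_subset hsub0)
  have hsq : ∑ i : Fin n, (L i / 2) ^ 2 ≤ 4 := by
    simp only [vol_ball_2d] at hvol
    rw [← Finset.sum_mul] at hvol
    have hπ0 : (ENNReal.ofReal Real.pi) ≠ 0 := (ENNReal.ofReal_pos.mpr Real.pi_pos).ne'
    have hle2 := (ENNReal.mul_le_mul_iff_left hπ0 ENNReal.ofReal_ne_top).mp hvol
    have hrw : ∀ i : Fin n, ENNReal.ofReal (L i / 2) ^ 2 =
        ENNReal.ofReal ((L i / 2) ^ 2) := fun i =>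
      (ENNReal.ofReal_pow (by positivity) 2).symm
    rw [Finset.sum_congr rfl (fun i _ => hrw i),
      ← ENNReal.ofReal_sum_of_nonneg (fun i _ => sq_nonneg _),
      ← ENNReal.ofReal_pow (by norm_num : (0:ℝ) ≤ 2)] at hle2
    have := (ENNReal.ofReal_le_ofReal_iff (by norm_num)).mp hle2
    norm_num at this
    exact this
  have hsumsq : ∑ i : Fin n, (L i) ^ 2 ≤ 16 := by
    have : ∑ i : Fin n, (L i) ^ 2 = 4 * ∑ i : Fin n, (L i / 2) ^ 2 := by
      rw [Finset.mul_sum]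
      exact Finset.sum_congr rfl (fun i _ => by ring)
    rw [this]; linarith
  -- Cauchy–Schwarz
  have hnn : 0 ≤ ∑ i : Fin n, L i := Finset.sum_nonneg (fun i _ => hL0 i)
  have hcs : (∑ i : Fin n, L i) ^ 2 ≤ (n : ℝ) * 16 := by
    calc (∑ i : Fin n, L i) ^ 2 ≤ (Finset.univ (α := Fin n)).card * ∑ i : Fin n, (L i) ^ 2 :=
          sq_sum_le_card_mul_sum_sq
      _ ≤ (n : ℝ) * 16 := by
          rw [Finset.card_univ, Fintype.card_fin]
          exact mul_le_mul_of_nonneg_left hsumsq (Nat.cast_nonneg n)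
  have h4 : 4 * Real.sqrt n = Real.sqrt ((n : ℝ) * 16) := by
    rw [Real.sqrt_mul (Nat.cast_nonneg n), show (16:ℝ) = 4 ^ 2 by norm_num,
      Real.sqrt_sq (by norm_num : (0:ℝ) ≤ 4)]
    ring
  rw [h4]
  exact (Real.le_sqrt hnn (by positivity)).mpr hcs
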